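/- arXiv:1706.08141 — 6 statements merged into one kernel-verified Lean document; each statement's English description precedes it below -/
import Mathlib

section
/- Let f : ℝᵖ → ℝ be convex, continuously differentiable, and L-smooth. Then for all x, y ∈ ℝᵖ (co-coercivity): ⟨∇f(x) − ∇f(y), x − y⟩ ≥ (1/L)∥∇f(x) − ∇f(y)∥². Equivalently, with γ = 0 the quadratic form 2L⟨x − y, ∇f(x) − ∇f(y)⟩ − 2∥∇f(x) − ∇f(y)∥² is nonnegative. -/
open intervalIntegral

lemma descent (p : ℕ) (f : EuclideanSpace ℝ (Fin p) → ℝ) (L : ℝ) (hL : 0 < L)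
    (hdiff : ContDiff ℝ 1 f)
    (hsmooth : ∀ x y, ‖gradient f x - gradient f y‖ ≤ L * ‖x - y‖)
    (x y : EuclideanSpace ℝ (Fin p)) :
    f y ≤ f x + (inner ℝ (gradient f x) (y - x) : ℝ) + L / 2 * ‖y - x‖ ^ 2 := by
  set c : ℝ → EuclideanSpace ℝ (Fin p) := fun t => x + t • (y - x) with hc
  set φ : ℝ → ℝ := fun t => (inner ℝ (gradient f (c t)) (y - x) : ℝ) with hφ
  have hdiffble := hdiff.differentiable one_ne_zero
  have hg : ∀ t : ℝ, HasDerivAt (fun t => f (c t)) (φ t) t := by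
    intro t
    have hc' : HasDerivAt c (y - x) t := by
      exact (((hasDerivAt_id t).smul_const (y - x)).const_add x).congr_deriv (one_smul _ _)
    have hf : HasFDerivAt f (fderiv ℝ f (c t)) (c t) := (hdiffble (c t)).hasFDerivAt
    have := hf.comp_hasDerivAt t hc'
    refine this.congr_deriv ?_
    show _ = (inner ℝ (gradient f (c t)) (y - x) : ℝ)
    rw [gradient, InnerProductSpace.toDual_symm_apply]
  have hcont : Continuous φ := by
    have h1 : Continuous fun z => gradient f z := by
      have := hdiff.continuous_fderiv one_ne_zero
      exact ((InnerProductSpace.toDual ℝ (EuclideanSpace ℝ (Fin p))).symm.continuous).comp this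
    have h2 : Continuous c := by continuity
    exact (h1.comp h2).inner continuous_const
  have hint : IntervalIntegrable φ MeasureTheory.volume 0 1 := hcont.intervalIntegrable 0 1
  have key : f (c 1) - f (c 0) = ∫ t in (0:ℝ)..1, φ t :=
    (integral_eq_sub_of_hasDerivAt (fun t _ => hg t) hint).symm
  have hbound : ∀ t ∈ Set.Icc (0:ℝ) 1, φ t ≤ φ 0 + L * ‖y - x‖ ^ 2 * t := by
    rintro t ⟨ht0, _⟩
    have h1 : φ t - φ 0 = (inner ℝ (gradient f (c t) - gradient f x) (y - x) : ℝ) := by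
      simp [hφ, hc, inner_sub_left]
    have h2 : (inner ℝ (gradient f (c t) - gradient f x) (y - x) : ℝ)
        ≤ ‖gradient f (c t) - gradient f x‖ * ‖y - x‖ := real_inner_le_norm _ _
    have h3 : ‖gradient f (c t) - gradient f x‖ ≤ L * (t * ‖y - x‖) := by
      have := hsmooth (c t) x
      simpa [hc, norm_smul, abs_of_nonneg ht0] using this
    nlinarith [norm_nonneg (y - x), mul_le_mul_of_nonneg_right h3 (norm_nonneg (y - x))]
  have hmono : (∫ t in (0:ℝ)..1, φ t) ≤ ∫ t in (0:ℝ)..1, (φ 0 + L * ‖y - x‖ ^ 2 * t) := by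
    apply integral_mono_on zero_le_one hint
    · exact ((continuous_const.add (continuous_const.mul continuous_id)).intervalIntegrable 0 1)
    · exact hbound
  have hval : (∫ t in (0:ℝ)..1, (φ 0 + L * ‖y - x‖ ^ 2 * t)) = φ 0 + L / 2 * ‖y - x‖ ^ 2 := by
    rw [integral_add (intervalIntegrable_const) (show IntervalIntegrable (fun t => L * ‖y - x‖ ^ 2 * t) MeasureTheory.volume 0 1 from
        (continuous_const.mul continuous_id').intervalIntegrable 0 1),
      integral_const, intervalIntegral.integral_const_mul, integral_id, smul_eq_mul]
    ring
  have hc0 : c 0 = x := by simp [hc]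
  have hc1 : c 1 = y := by simp [hc]
  have hφ0 : φ 0 = (inner ℝ (gradient f x) (y - x) : ℝ) := by simp [hφ, hc0]
  rw [hc0, hc1] at key
  have final := key ▸ (hmono.trans_eq hval)
  rw [hφ0] at final
  linarith

lemma strongconv (p : ℕ) (f : EuclideanSpace ℝ (Fin p) → ℝ) (L : ℝ) (hL : 0 < L)
    (hdiff : ContDiff ℝ 1 f)
    (hconv : ∀ x y, f x ≥ f y + (inner ℝ (gradient f y) (x - y) : ℝ))
    (hsmooth : ∀ x y, ‖gradient f x - gradient f y‖ ≤ L * ‖x - y‖)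
    (x y : EuclideanSpace ℝ (Fin p)) :
    f y ≥ f x + (inner ℝ (gradient f x) (y - x) : ℝ)
      + 1 / (2 * L) * ‖gradient f y - gradient f x‖ ^ 2 := by
  set g : EuclideanSpace ℝ (Fin p) := gradient f y - gradient f x with hg
  set z : EuclideanSpace ℝ (Fin p) := y - L⁻¹ • g with hzdef
  have hA := hconv z x
  have hB := descent p f L hL hdiff hsmooth y z
  have hz : z - y = -(L⁻¹ • g) := by rw [hzdef]; abel
  have hzx : z - x = (y - x) - L⁻¹ • g := by rw [hzdef]; abel
  have e1 : (inner ℝ (gradient f y) (z - y) : ℝ) = -(L⁻¹ * (inner ℝ (gradient f y) g : ℝ)) := by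
    rw [hz, inner_neg_right, real_inner_smul_right]
  have e2 : ‖z - y‖ ^ 2 = (L⁻¹) ^ 2 * ‖g‖ ^ 2 := by
    rw [hz, norm_neg, norm_smul, mul_pow, Real.norm_eq_abs, sq_abs]
  have e3 : (inner ℝ (gradient f x) (z - x) : ℝ)
      = (inner ℝ (gradient f x) (y - x) : ℝ) - L⁻¹ * (inner ℝ (gradient f x) g : ℝ) := by
    rw [hzx, inner_sub_right, real_inner_smul_right]
  have e4 : (inner ℝ (gradient f y) g : ℝ) - (inner ℝ (gradient f x) g : ℝ) = ‖g‖ ^ 2 := by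
    rw [← inner_sub_left, ← hg, real_inner_self_eq_norm_sq]
  have e5 : L⁻¹ * (inner ℝ (gradient f y) g : ℝ) - L⁻¹ * (inner ℝ (gradient f x) g : ℝ)
      = L⁻¹ * ‖g‖ ^ 2 := by rw [← mul_sub, e4]
  have e6 : L / 2 * ((L⁻¹) ^ 2 * ‖g‖ ^ 2) = 1 / (2 * L) * ‖g‖ ^ 2 := by
    field_simp
  have e7 : L⁻¹ * ‖g‖ ^ 2 = 2 * (1 / (2 * L) * ‖g‖ ^ 2) := by
    field_simp
  rw [e1, e2] at hB
  rw [e3] at hA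
  linarith

theorem stmt_9 (p : ℕ) (f : EuclideanSpace ℝ (Fin p) → ℝ) (L : ℝ) (hL : 0 < L)
    (hdiff : ContDiff ℝ 1 f)
    (hconv : ∀ x y, f x ≥ f y + (inner ℝ (gradient f y) (x - y) : ℝ))
    (hsmooth : ∀ x y, ‖gradient f x - gradient f y‖ ≤ L * ‖x - y‖) :
    ∀ x y : EuclideanSpace ℝ (Fin p),
      ((inner ℝ (gradient f x - gradient f y) (x - y) : ℝ)
          ≥ (1 / L) * ‖gradient f x - gradient f y‖ ^ 2) ∧
      2 * L * (inner ℝ (x - y) (gradient f x - gradient f y) : ℝ)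
          - 2 * ‖gradient f x - gradient f y‖ ^ 2 ≥ 0 := by
  intro x y
  have h1 := strongconv p f L hL hdiff hconv hsmooth x y
  have h2 := strongconv p f L hL hdiff hconv hsmooth y x
  have en : ‖gradient f y - gradient f x‖ = ‖gradient f x - gradient f y‖ := norm_sub_rev _ _
  have ei : (inner ℝ (gradient f x) (y - x) : ℝ) = -(inner ℝ (gradient f x) (x - y) : ℝ) := by
    rw [← inner_neg_right]; congr 1; abel
  have es : (inner ℝ (gradient f x - gradient f y) (x - y) : ℝ)
      = (inner ℝ (gradient f x) (x - y) : ℝ) - (inner ℝ (gradient f y) (x - y) : ℝ) :=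
    inner_sub_left _ _ _
  have main : (inner ℝ (gradient f x - gradient f y) (x - y) : ℝ)
      ≥ (1 / L) * ‖gradient f x - gradient f y‖ ^ 2 := by
    rw [en, ei] at h1
    have e8 : 1 / (2 * L) * ‖gradient f x - gradient f y‖ ^ 2
        + 1 / (2 * L) * ‖gradient f x - gradient f y‖ ^ 2
        = 1 / L * ‖gradient f x - gradient f y‖ ^ 2 := by field_simp; ring
    linarith
  refine ⟨main, ?_⟩
  have ec : (inner ℝ (x - y) (gradient f x - gradient f y) : ℝ)
      = (inner ℝ (gradient f x - gradient f y) (x - y) : ℝ) := real_inner_comm _ _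
  rw [ec]
  have := mul_le_mul_of_nonneg_left main (by positivity : (0:ℝ) ≤ 2 * L)
  have e9 : 2 * L * (1 / L * ‖gradient f x - gradient f y‖ ^ 2)
      = 2 * ‖gradient f x - gradient f y‖ ^ 2 := by field_simp
  linarith
end

section
/- Let ρ² = 1 − min{(2Lα − 1)/((Lα − 1)n), 2mα − αm²/((1 − Lα)L)} with 0 < m ≤ L, n ≥ 1, and 0 < α ≤ 1/(2L). Then the choice p₁ = 1/L, p₂ = 1/α, λ₁ = 0, λ₂ = 1/L satisfies: (i) p₁ + α²p₂ − 2λ₂ ≤ 0; (ii) ρ² ≥ 1 − 1/n − (α⁴p₂²/(p₁ + α²p₂ − 2λ₂) − α²p₂)/(np₁); and (iii) ρ² ≥ 1 − 2(λ₁+λ₂)mL/p₂ − (−αp₂ + (L+m)(λ₁+λ₂))²/((p₁ + α²p₂ − 2(λ₁+λ₂))p₂). -/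
theorem stmt_13 (m L α : ℝ) (n : ℕ)
    (hm : 0 < m) (hmL : m ≤ L) (hn : 1 ≤ n) (hα : 0 < α) (hα2 : α ≤ 1 / (2 * L)) :
    letI ρ2 : ℝ := 1 - min ((2 * L * α - 1) / ((L * α - 1) * n))
        (2 * m * α - α * m ^ 2 / ((1 - L * α) * L))
    letI p₁ : ℝ := 1 / L
    letI p₂ : ℝ := 1 / α
    letI l₁ : ℝ := 0
    letI l₂ : ℝ := 1 / L
    (p₁ + α ^ 2 * p₂ - 2 * l₂ ≤ 0) ∧
    (ρ2 ≥ 1 - 1 / n -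
      (α ^ 4 * p₂ ^ 2 / (p₁ + α ^ 2 * p₂ - 2 * l₂) - α ^ 2 * p₂) / (n * p₁)) ∧
    (ρ2 ≥ 1 - 2 * (l₁ + l₂) * m * L / p₂ -
      (-(α * p₂) + (L + m) * (l₁ + l₂)) ^ 2 / ((p₁ + α ^ 2 * p₂ - 2 * (l₁ + l₂)) * p₂)) := by
  have hL : (0:ℝ) < L := hm.trans_le hmL
  have hLa : L * α ≤ 1 / 2 := by
    have := mul_le_mul_of_nonneg_left hα2 hL.le
    have h2 : L * (1 / (2 * L)) = 1 / 2 := by field_simp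
    linarith [this, h2 ▸ this]
  have hLne : L ≠ 0 := hL.ne'
  have hαne : α ≠ 0 := hα.ne'
  have hn0 : (1:ℝ) ≤ (n:ℝ) := by exact_mod_cast hn
  have hnpos : (0:ℝ) < (n:ℝ) := by linarith
  have hnne : (n:ℝ) ≠ 0 := hnpos.ne'
  have h1 : L * α - 1 < 0 := by nlinarith
  have h1ne : L * α - 1 ≠ 0 := h1.ne
  have hkey : 1 / L + α ^ 2 * (1 / α) - 2 * (1 / L) = α - 1 / L := by
    field_simp; ring
  have hneg : α - 1 / L < 0 := by
    rw [sub_neg, lt_div_iff₀ hL]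
    linarith
  have hnegne : α - 1 / L ≠ 0 := hneg.ne
  have hfrac : α - 1 / L = (L * α - 1) / L := by field_simp
  refine ⟨?_, ?_, ?_⟩
  · show 1 / L + α ^ 2 * (1 / α) - 2 * (1 / L) ≤ 0
    rw [hkey]; linarith
  · have e1 : 1 - 1 / (n:ℝ) -
        (α ^ 4 * (1 / α) ^ 2 / (1 / L + α ^ 2 * (1 / α) - 2 * (1 / L)) - α ^ 2 * (1 / α)) /
          ((n:ℝ) * (1 / L)) =
        1 - (2 * L * α - 1) / ((L * α - 1) * n) := by
      rw [hkey, hfrac]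
      field_simp
      ring_nf
      have h1' : -1 + α * L ≠ 0 := by intro h; apply h1ne; linarith
      field_simp
      ring
    rw [e1]
    have := min_le_left ((2 * L * α - 1) / ((L * α - 1) * n))
      (2 * m * α - α * m ^ 2 / ((1 - L * α) * L))
    linarith
  · have e2 : 1 - 2 * ((0:ℝ) + 1 / L) * m * L / (1 / α) -
        (-(α * (1 / α)) + (L + m) * (0 + 1 / L)) ^ 2 /
          ((1 / L + α ^ 2 * (1 / α) - 2 * (0 + 1 / L)) * (1 / α)) =
        1 - (2 * m * α - α * m ^ 2 / ((1 - L * α) * L)) := by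
      have : (1 / L + α ^ 2 * (1 / α) - 2 * ((0:ℝ) + 1 / L)) = α - 1 / L := by
        rw [← hkey]; ring
      rw [this, hfrac]
      have h1L : (1:ℝ) - L * α ≠ 0 := by intro h; apply h1ne; linarith
      field_simp
      ring
    rw [e2]
    have := min_le_right ((2 * L * α - 1) / ((L * α - 1) * n))
      (2 * m * α - α * m ^ 2 / ((1 - L * α) * L))
    linarith
end

section
/- Let 0 < m ≤ L, n ≥ 1, 0 < α ≤ 1/(2L), and let b ∈ [2Lα, 1]. Define ρ² = 1 − min{(2Lα − b)/((Lα − b)n), 2(1−b)mα − αm²(1−b)²/((2 − b − Lα)L)}. Then 0 ≤ ρ² ≤ 1, and the choice p₁ = b/L, p₂ = 1/α, λ₁ = (1−b)/L, λ₂ = b/L makes p₁ > 0, λ₁ ≥ 0 and satisfies the scalar conditions p₁ + α²p₂ − 2λ₂ ≤ 0, ρ² ≥ 1 − 1/n − (α⁴p₂²/(p₁+α²p₂−2λ₂) − α²p₂)/(np₁), and ρ² ≥ 1 − 2λ₁mL/p₂ − (−αp₂ + (L+m)λ₁ + Lλ₂)²/((p₁ + α²p₂ − 2λ₁ − 2λ₂)p₂).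 -/
set_option maxHeartbeats 1600000


theorem stmt_14 (m L α b : ℝ) (n : ℕ)
    (hm : 0 < m) (hmL : m ≤ L) (hn : 1 ≤ n) (hα : 0 < α) (hα2 : α ≤ 1 / (2 * L))
    (hb1 : 2 * L * α ≤ b) (hb2 : b ≤ 1) :
    letI ρ2 : ℝ := 1 - min ((2 * L * α - b) / ((L * α - b) * n))
        (2 * (1 - b) * m * α - α * m ^ 2 * (1 - b) ^ 2 / ((2 - b - L * α) * L))
    letI p₁ : ℝ := b / L
    letI p₂ : ℝ := 1 / α
    letI l₁ : ℝ := (1 - b) / L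
    letI l₂ : ℝ := b / L
    (0 ≤ ρ2 ∧ ρ2 ≤ 1) ∧ (0 < p₁) ∧ (0 ≤ l₁) ∧
    (p₁ + α ^ 2 * p₂ - 2 * l₂ ≤ 0) ∧
    (ρ2 ≥ 1 - 1 / n -
      (α ^ 4 * p₂ ^ 2 / (p₁ + α ^ 2 * p₂ - 2 * l₂) - α ^ 2 * p₂) / (n * p₁)) ∧
    (ρ2 ≥ 1 - 2 * l₁ * m * L / p₂ -
      (-(α * p₂) + (L + m) * l₁ + L * l₂) ^ 2 / ((p₁ + α ^ 2 * p₂ - 2 * l₁ - 2 * l₂) * p₂)) := by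
  have hL : 0 < L := lt_of_lt_of_le hm hmL
  have hn1 : (1 : ℝ) ≤ n := by exact_mod_cast hn
  have hn' : (0 : ℝ) < n := by linarith
  have hLα : 0 < L * α := mul_pos hL hα
  have h2L : α * (2 * L) ≤ 1 := (le_div_iff₀ (by positivity)).mp hα2
  have hba : L * α < b := by nlinarith
  have hb0 : 0 < b := lt_trans hLα hba
  have h2 : 0 < 2 - b - L * α := by nlinarith
  have hL' : L ≠ 0 := hL.ne'
  have hα' : α ≠ 0 := hα.ne'
  have hn'' : (n : ℝ) ≠ 0 := hn'.ne'
  set A : ℝ := (2 * L * α - b) / ((L * α - b) * n) with hA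
  set B : ℝ := 2 * (1 - b) * m * α - α * m ^ 2 * (1 - b) ^ 2 / ((2 - b - L * α) * L) with hB
  have hAeq : A = (b - 2 * L * α) / ((b - L * α) * n) := by
    rw [hA, show (2 * L * α - b) = -(b - 2 * L * α) by ring,
      show (L * α - b) * n = -((b - L * α) * n) by ring, neg_div_neg_eq]
  have hA0 : 0 ≤ A := by
    rw [hAeq]
    exact div_nonneg (by linarith) (mul_nonneg (by linarith) hn'.le)
  have hA1 : A ≤ 1 := by
    rw [hAeq]
    apply div_le_one_of_le₀
    · nlinarith [mul_nonneg (by linarith : (0:ℝ) ≤ b - L * α)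
        (by linarith : (0:ℝ) ≤ (n:ℝ) - 1)]
    · exact mul_nonneg (by linarith) hn'.le
  have hkey : m * (1 - b) ≤ 2 * L * (2 - b - L * α) := by
    nlinarith [mul_nonneg (sub_nonneg.mpr hmL) (sub_nonneg.mpr hb2),
      mul_nonneg hL.le (by linarith : (0:ℝ) ≤ 1 - α * (2 * L)),
      mul_nonneg hL.le (by linarith : (0:ℝ) ≤ 1 - b)]
  have hB0 : 0 ≤ B := by
    rw [hB, sub_nonneg, div_le_iff₀ (by positivity)]
    nlinarith [mul_nonneg (mul_nonneg (mul_nonneg hα.le hm.le) (sub_nonneg.mpr hb2))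
      (sub_nonneg.mpr hkey)]
  have hmin0 : 0 ≤ min A B := le_min hA0 hB0
  have hmin1 : min A B ≤ 1 := le_trans (min_le_left _ _) hA1
  have hd2 : L * α - b ≠ 0 := ne_of_lt (by linarith)
  have hd3 : b + L * α - 2 ≠ 0 := ne_of_lt (by linarith)
  have hb' : b ≠ 0 := hb0.ne'
  refine ⟨⟨by linarith, by linarith⟩, by positivity, ?_, ?_, ?_, ?_⟩
  · exact div_nonneg (by linarith) hL.le
  · have h1 : b / L + α ^ 2 * (1 / α) - 2 * (b / L) = (L * α - b) / L := by
      field_simp; ring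
    rw [h1]
    exact div_nonpos_of_nonpos_of_nonneg (by linarith) hL.le
  · have heq : 1 - 1 / (n : ℝ) -
        (α ^ 4 * (1 / α) ^ 2 / (b / L + α ^ 2 * (1 / α) - 2 * (b / L)) - α ^ 2 * (1 / α)) /
          (n * (b / L)) = 1 - A := by
      rw [hA]
      have hd : b / L + α ^ 2 * (1 / α) - 2 * (b / L) = (L * α - b) / L := by
        field_simp; ring
      rw [hd]
      field_simp
      ring_nf
      field_simp [show -b + α * L ≠ 0 from fun h => hd2 (by linarith)]
      ring
    rw [ge_iff_le, heq]
    have := min_le_left A B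
    linarith
  · have heq : 1 - 2 * ((1 - b) / L) * m * L / (1 / α) -
        (-(α * (1 / α)) + (L + m) * ((1 - b) / L) + L * (b / L)) ^ 2 /
          ((b / L + α ^ 2 * (1 / α) - 2 * ((1 - b) / L) - 2 * (b / L)) * (1 / α)) = 1 - B := by
      rw [hB]
      have hd : b / L + α ^ 2 * (1 / α) - 2 * ((1 - b) / L) - 2 * (b / L)
          = (b + L * α - 2) / L := by field_simp; ring
      rw [hd]
      have h1 : 2 - b - L * α ≠ 0 := ne_of_gt h2
      field_simp
      ring
    rw [ge_iff_le, heq]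
    have := min_le_right A B
    linarith
end

section
/- Let 0 < m ≤ L, n ≥ 1, α = m/(4(m²n + L²)), and b = 2(m²n + L²)/L². Then 2 ≤ b ≤ 3m/(4αL²), and min{(b−2)/((b−1)n), (3mα)/2 − 2bL²α²} ≥ m²/(8(m²n + L²)). Consequently 1 − min{(b−2)/((b−1)n), (3mα)/2 − 2bL²α²} ≤ 1 − m²/(8(m²n + L²)). -/
theorem stmt_15 (m L : ℝ) (n : ℕ) (hm : 0 < m) (hmL : m ≤ L) (hn : 1 ≤ n) :
    letI α : ℝ := m / (4 * (m ^ 2 * n + L ^ 2))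
    letI b : ℝ := 2 * (m ^ 2 * n + L ^ 2) / L ^ 2
    (2 ≤ b ∧ b ≤ 3 * m / (4 * α * L ^ 2)) ∧
    (min ((b - 2) / ((b - 1) * n)) (3 * m * α / 2 - 2 * b * L ^ 2 * α ^ 2)
        ≥ m ^ 2 / (8 * (m ^ 2 * n + L ^ 2))) ∧
    (1 - min ((b - 2) / ((b - 1) * n)) (3 * m * α / 2 - 2 * b * L ^ 2 * α ^ 2)
        ≤ 1 - m ^ 2 / (8 * (m ^ 2 * n + L ^ 2))) := by
  have hL : (0:ℝ) < L := lt_of_lt_of_le hm hmL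
  have hn1 : (1:ℝ) ≤ (n:ℝ) := by exact_mod_cast hn
  have hn0 : (0:ℝ) < (n:ℝ) := by linarith
  have hS : (0:ℝ) < m ^ 2 * n + L ^ 2 := by positivity
  have hL2 : (0:ℝ) < L ^ 2 := by positivity
  refine id ?_
  have h1 : 2 ≤ 2 * (m ^ 2 * n + L ^ 2) / L ^ 2 := by
    rw [le_div_iff₀ hL2]
    nlinarith [sq_nonneg m, mul_pos (mul_pos hm hm) hn0]
  have hα : 4 * (m / (4 * (m ^ 2 * n + L ^ 2))) * L ^ 2 = m * L ^ 2 / (m ^ 2 * n + L ^ 2) := by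
    field_simp
  have h2 : 2 * (m ^ 2 * n + L ^ 2) / L ^ 2
      ≤ 3 * m / (4 * (m / (4 * (m ^ 2 * n + L ^ 2))) * L ^ 2) := by
    rw [hα, div_div_eq_mul_div, div_le_div_iff₀ hL2 (by positivity)]
    nlinarith [mul_pos (mul_pos hm hS) hL2]
  have hb1 : (0:ℝ) < (2 * (m ^ 2 * n + L ^ 2) / L ^ 2 - 1) * n := by
    have : (1:ℝ) < 2 * (m ^ 2 * n + L ^ 2) / L ^ 2 := by linarith
    nlinarith
  have hmin1 : m ^ 2 / (8 * (m ^ 2 * n + L ^ 2))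
      ≤ (2 * (m ^ 2 * n + L ^ 2) / L ^ 2 - 2) / ((2 * (m ^ 2 * n + L ^ 2) / L ^ 2 - 1) * n) := by
    rw [div_le_div_iff₀ (by positivity) hb1]
    have e1 : 2 * (m ^ 2 * n + L ^ 2) / L ^ 2 - 2 = 2 * m ^ 2 * n / L ^ 2 := by
      field_simp; ring
    have e2 : 2 * (m ^ 2 * n + L ^ 2) / L ^ 2 - 1 = (2 * m ^ 2 * n + L ^ 2) / L ^ 2 := by
      field_simp; ring
    rw [e1, e2]
    field_simp
    nlinarith [mul_pos (mul_pos (mul_pos hm hm) hn0) hL2,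
      mul_pos (mul_pos (mul_pos (mul_pos hm hm) hn0) (mul_pos hm hm)) hn0]
  have hmin2 : 3 * m * (m / (4 * (m ^ 2 * n + L ^ 2))) / 2
      - 2 * (2 * (m ^ 2 * n + L ^ 2) / L ^ 2) * L ^ 2 * (m / (4 * (m ^ 2 * n + L ^ 2))) ^ 2
      = m ^ 2 / (8 * (m ^ 2 * n + L ^ 2)) := by
    field_simp
    ring
  refine ⟨⟨h1, h2⟩, ?_, ?_⟩
  · exact le_min hmin1 hmin2.ge
  · have := le_min hmin1 (le_of_eq hmin2.symm)
    linarith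
end

section
/- Let 0 < m ≤ L, n ≥ 1 a natural number with n² ≥ 50L/m, and α = 1/(5L). With the choices p₁ = α/L, p₄ = 0.5mα, λ₁ = 0, λ₂ = α/L, the rate ρ² = 1 − min{1/(2n), m/(20L)} satisfies the three inequalities: ρ² ≥ 1 − 1/n + 2αL/(n(1 − αL)); ρ² ≥ 1 − 1/n + 4/(n³mα(1 − Lα)); and ρ² ≥ 1 − 1.5mα + m²α/(L(1 − Lα)). -/
theorem stmt_16 (m L : ℝ) (n : ℕ)
    (hm : 0 < m) (hmL : m ≤ L) (hn : 1 ≤ n)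
    (hbig : (n : ℝ) ^ 2 ≥ 50 * L / m) :
    letI α : ℝ := 1 / (5 * L)
    letI ρ2 : ℝ := 1 - min (1 / (2 * (n : ℝ))) (m / (20 * L))
    (ρ2 ≥ 1 - 1 / n + 2 * α * L / (n * (1 - α * L))) ∧
    (ρ2 ≥ 1 - 1 / n + 4 / (n ^ 3 * m * α * (1 - L * α))) ∧
    (ρ2 ≥ 1 - 1.5 * m * α + m ^ 2 * α / (L * (1 - L * α))) := by
  have hL : 0 < L := lt_of_lt_of_le hm hmL
  have ht : (1:ℝ) ≤ (n:ℝ) := by exact_mod_cast hn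
  have ht0 : (0:ℝ) < (n:ℝ) := by linarith
  have hLne : L ≠ 0 := ne_of_gt hL
  have hmne : m ≠ 0 := ne_of_gt hm
  have htne : (n:ℝ) ≠ 0 := ne_of_gt ht0
  have hmin1 : min (1 / (2 * (n:ℝ))) (m / (20 * L)) ≤ 1 / (2 * (n:ℝ)) := min_le_left _ _
  have hmin2 : min (1 / (2 * (n:ℝ))) (m / (20 * L)) ≤ m / (20 * L) := min_le_right _ _
  have h45 : (1 / (5 * L)) * L = 1 / 5 := by field_simp
  have h45' : L * (1 / (5 * L)) = 1 / 5 := by field_simp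
  have hhalf : 1 / (2 * (n:ℝ)) + 1 / (2 * (n:ℝ)) = 1 / (n:ℝ) := by
    field_simp
    norm_num
  refine ⟨?_, ?_, ?_⟩
  · show 1 - min (1 / (2 * (n:ℝ))) (m / (20 * L)) ≥
        1 - 1 / (n:ℝ) + 2 * (1 / (5 * L)) * L / ((n:ℝ) * (1 - (1 / (5 * L)) * L))
    have e1 : 2 * (1 / (5 * L)) * L / ((n:ℝ) * (1 - (1 / (5 * L)) * L)) = 1 / (2 * (n:ℝ)) := by
      rw [mul_assoc, h45]
      field_simp
      ring
    rw [e1]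
    linarith
  · show 1 - min (1 / (2 * (n:ℝ))) (m / (20 * L)) ≥
        1 - 1 / (n:ℝ) + 4 / ((n:ℝ) ^ 3 * m * (1 / (5 * L)) * (1 - L * (1 / (5 * L))))
    have e2 : 4 / ((n:ℝ) ^ 3 * m * (1 / (5 * L)) * (1 - L * (1 / (5 * L)))) =
        25 * L / ((n:ℝ) ^ 3 * m) := by
      rw [h45']
      field_simp
      ring
    rw [e2]
    have hbig' : 50 * L ≤ (n:ℝ) ^ 2 * m := by
      have := (div_le_iff₀ hm).mp hbig
      linarith
    have h2 : 25 * L / ((n:ℝ) ^ 3 * m) ≤ 1 / (2 * (n:ℝ)) := by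
      rw [div_le_div_iff₀ (by positivity) (by positivity)]
      nlinarith [pow_pos ht0 3, mul_pos ht0 ht0]
    linarith
  · show 1 - min (1 / (2 * (n:ℝ))) (m / (20 * L)) ≥
        1 - 1.5 * m * (1 / (5 * L)) + m ^ 2 * (1 / (5 * L)) / (L * (1 - L * (1 / (5 * L))))
    have e3 : 1 - 1.5 * m * (1 / (5 * L)) + m ^ 2 * (1 / (5 * L)) / (L * (1 - L * (1 / (5 * L)))) =
        1 - 3 * m / (10 * L) + m ^ 2 / (4 * L ^ 2) := by
      rw [h45']
      field_simp
      ring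
    rw [e3]
    have h4 : 3 * m / (10 * L) - m ^ 2 / (4 * L ^ 2) - m / (20 * L) = m * (L - m) / (4 * L ^ 2) := by
      field_simp
      ring
    have h5 : 0 ≤ m * (L - m) / (4 * L ^ 2) := by
      apply div_nonneg _ (by positivity)
      nlinarith
    linarith
end

section
/- Let 0 < m ≤ L and n a natural number with n ≥ 48L²/m², and α = 1/(2nm). Then the rate ρ² = 1 − 1/(3n) satisfies: ρ² ≥ 1 − 1/n + 32/(9n³mα), and ρ² ≥ 1 − 1.25mα + 8L²α² + m²α/(L(2 + 3Lα)). (In particular n ≥ 48L²/m² together with L ≥ m implies n ≥ 11, which suffices for the first inequality.) -/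
theorem stmt_17 (m L : ℝ) (n : ℕ)
    (hm : 0 < m) (hmL : m ≤ L)
    (hbig : (n : ℝ) ≥ 48 * L ^ 2 / m ^ 2) :
    letI α : ℝ := 1 / (2 * n * m)
    letI ρ2 : ℝ := 1 - 1 / (3 * n)
    (ρ2 ≥ 1 - 1 / n + 32 / (9 * n ^ 3 * m * α)) ∧
    (ρ2 ≥ 1 - 1.25 * m * α + 8 * L ^ 2 * α ^ 2 + m ^ 2 * α / (L * (2 + 3 * L * α))) ∧
    11 ≤ n := by
  have hL : 0 < L := hm.trans_le hmL
  have h1 : (48:ℝ) ≤ 48 * L ^ 2 / m ^ 2 := by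
    rw [le_div_iff₀ (by positivity)]; nlinarith
  have hn48 : (48:ℝ) ≤ (n:ℝ) := le_trans h1 hbig
  have hn : (0:ℝ) < (n:ℝ) := by linarith
  have hnm2 : (n:ℝ) * m ^ 2 ≥ 48 * L ^ 2 := by
    have := (div_le_iff₀ (by positivity : (0:ℝ) < m ^ 2)).mp hbig
    linarith
  refine ⟨?_, ?_, ?_⟩
  · show (1:ℝ) - 1/(3*n) ≥ 1 - 1/n + 32/(9*n^3*m*(1/(2*(n:ℝ)*m)))
    have h2 : (9:ℝ)*(n:ℝ)^3*m*(1/(2*(n:ℝ)*m)) = 9*(n:ℝ)^2/2 := by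
      field_simp
    rw [h2]
    have hA : (32:ℝ)/(9*(n:ℝ)^2/2) ≤ 1/(n:ℝ) - 1/(3*(n:ℝ)) := by
      have hB : (1:ℝ)/(n:ℝ) - 1/(3*(n:ℝ)) = 2/(3*(n:ℝ)) := by field_simp; ring
      rw [hB, div_le_div_iff₀ (by positivity) (by positivity)]
      nlinarith
    linarith
  · show (1:ℝ) - 1/(3*n) ≥ 1 - 1.25 * m * (1/(2*(n:ℝ)*m)) + 8 * L ^ 2 * (1/(2*(n:ℝ)*m)) ^ 2
      + m ^ 2 * (1/(2*(n:ℝ)*m)) / (L * (2 + 3 * L * (1/(2*(n:ℝ)*m))))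
    have hα : (0:ℝ) < 1/(2*(n:ℝ)*m) := by positivity
    have hden : (0:ℝ) < L * (2 + 3 * L * (1/(2*(n:ℝ)*m))) := by positivity
    have hterm : m ^ 2 * (1/(2*(n:ℝ)*m)) / (L * (2 + 3 * L * (1/(2*(n:ℝ)*m)))) ≤ 1/(4*n) := by
      rw [div_le_iff₀ hden]
      have h3 : m ^ 2 * (1/(2*(n:ℝ)*m)) = m/(2*n) := by field_simp
      have h4 : (1:ℝ)/(4*n) * (L * (2 + 3 * L * (1/(2*(n:ℝ)*m)))) ≥ 1/(4*n) * (L * 2) := by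
        apply mul_le_mul_of_nonneg_left _ (by positivity)
        apply mul_le_mul_of_nonneg_left _ hL.le
        nlinarith [mul_pos hL hα]
      have h5 : m/(2*(n:ℝ)) ≤ L/(2*(n:ℝ)) := by gcongr
      have h5' : (1:ℝ)/(4*(n:ℝ)) * (L * 2) = L/(2*(n:ℝ)) := by ring
      linarith [h3 ▸ (h5.trans_eq h5'.symm)]
    have h6 : (8:ℝ) * L ^ 2 * (1/(2*(n:ℝ)*m)) ^ 2 ≤ 1/(24*n) := by
      rw [show (8:ℝ)*L^2*(1/(2*(n:ℝ)*m))^2 = 2*L^2/((n:ℝ)^2*m^2) by field_simp; ring,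
        div_le_div_iff₀ (by positivity) (by positivity)]
      nlinarith [mul_le_mul_of_nonneg_left hnm2 hn.le]
    have h7 : (1.25:ℝ) * m * (1/(2*(n:ℝ)*m)) = 5/(8*n) := by
      field_simp; ring
    rw [h7]
    have h8 : (5:ℝ)/(8*n) - 1/(3*n) - 1/(24*n) - 1/(4*n) = 0 := by
      field_simp; ring
    linarith
  · exact_mod_cast Nat.cast_le.mp (by push_cast; linarith : ((11:ℕ):ℝ) ≤ (n:ℝ))
end
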